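/- arXiv:2012.08465 — 6 statements merged into one kernel-verified Lean document; each statement's English description precedes it below -/
import Mathlib

section
/- Let n ≥ 2 and d ≥ n − 1 be integers. For unit vectors u_1, …, u_n, v_1, …, v_n in ℝ^d, define the cross-entropy loss L(u,v) = Σ_{i=1}^n log( (Σ_{j=1}^n e^{⟨v_j, u_i⟩}) / e^{⟨v_i, u_i⟩} ). Then L(u,v) ≥ n·log(1 + (n−1)·e^{−n/(n−1)}), and equality holds if and only if v_i = u_i for every i and ⟨u_i, u_j⟩ = −1/(n−1) for all i ≠ j (i.e., the u_i form a simplex equiangular tight frame). -/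
open scoped RealInnerProductSpace BigOperators


open Finset Real

open Finset Real

-- weighted AM-GM two point, via exp tangent
private lemma core_le {k u : ℝ} (hk0 : 0 ≤ k) (hk1 : k ≤ 1) :
    Real.exp (k * u) ≤ (1 - k) + k * Real.exp u := by
  have h1 := Real.add_one_le_exp (-(k*u))
  have h2 := Real.add_one_le_exp ((1-k)*u)
  have e1 : Real.exp (k*u) * Real.exp (-(k*u)) = 1 := by
    rw [← Real.exp_add]; simp
  have e2 : Real.exp (k*u) * Real.exp ((1-k)*u) = Real.exp u := by
    rw [← Real.exp_add]; ring_nf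
  have key : 1 ≤ (1-k) * Real.exp (-(k*u)) + k * Real.exp ((1-k)*u) := by nlinarith
  nlinarith [Real.exp_pos (k*u), Real.exp_pos (-(k*u)), Real.exp_pos ((1-k)*u)]

private lemma core_lt {k u : ℝ} (hk0 : 0 < k) (hk1 : k < 1) (hu : u ≠ 0) :
    Real.exp (k * u) < (1 - k) + k * Real.exp u := by
  have h1 := Real.add_one_lt_exp (x := -(k*u)) (by simp [hk0.ne', hu])
  have h2 := Real.add_one_le_exp ((1-k)*u)
  have e1 : Real.exp (k*u) * Real.exp (-(k*u)) = 1 := by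
    rw [← Real.exp_add]; simp
  have e2 : Real.exp (k*u) * Real.exp ((1-k)*u) = Real.exp u := by
    rw [← Real.exp_add]; ring_nf
  have key : 1 < (1-k) * Real.exp (-(k*u)) + k * Real.exp ((1-k)*u) := by nlinarith
  nlinarith [Real.exp_pos (k*u), Real.exp_pos (-(k*u)), Real.exp_pos ((1-k)*u)]

-- tangent line bound for s ↦ log (1 + B exp s) at 0
private lemma logG_ge {B : ℝ} (hB : 0 < B) (w : ℝ) :
    Real.log (1 + B) + (B / (1 + B)) * w ≤ Real.log (1 + B * Real.exp w) := by
  have hA : (0:ℝ) < 1 + B := by linarith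
  set k := B / (1 + B) with hk
  have hk0 : 0 < k := div_pos hB hA
  have hk1 : k < 1 := (div_lt_one hA).2 (by linarith)
  have hid : 1 + B * Real.exp w = (1 + B) * ((1 - k) + k * Real.exp w) := by
    field_simp [hk]
    rw [hk]; field_simp; ring
  have h1 : (1 + B) * Real.exp (k * w) ≤ 1 + B * Real.exp w := by
    rw [hid]
    exact mul_le_mul_of_nonneg_left (core_le hk0.le hk1.le) hA.le
  calc Real.log (1 + B) + k * w = Real.log ((1 + B) * Real.exp (k * w)) := by
        rw [Real.log_mul hA.ne' (Real.exp_pos _).ne', Real.log_exp]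
    _ ≤ Real.log (1 + B * Real.exp w) :=
        Real.log_le_log (by positivity) h1

private lemma logG_lt {B : ℝ} (hB : 0 < B) {w : ℝ} (hw : w ≠ 0) :
    Real.log (1 + B) + (B / (1 + B)) * w < Real.log (1 + B * Real.exp w) := by
  have hA : (0:ℝ) < 1 + B := by linarith
  set k := B / (1 + B) with hk
  have hk0 : 0 < k := div_pos hB hA
  have hk1 : k < 1 := (div_lt_one hA).2 (by linarith)
  have hid : 1 + B * Real.exp w = (1 + B) * ((1 - k) + k * Real.exp w) := by
    field_simp [hk]
    rw [hk]; field_simp; ring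
  have h1 : (1 + B) * Real.exp (k * w) < 1 + B * Real.exp w := by
    rw [hid]
    exact mul_lt_mul_of_pos_left (core_lt hk0 hk1 hw) hA
  calc Real.log (1 + B) + k * w = Real.log ((1 + B) * Real.exp (k * w)) := by
        rw [Real.log_mul hA.ne' (Real.exp_pos _).ne', Real.log_exp]
    _ < Real.log (1 + B * Real.exp w) :=
        Real.log_lt_log (by positivity) h1

-- Jensen for exp on a finite set, with equality case
private lemma sum_exp_ge {α : Type*} {S : Finset α} (δ : α → ℝ) (hS : 0 < (S.card : ℝ)) :
    (S.card : ℝ) * Real.exp ((∑ j ∈ S, δ j) / S.card) ≤ ∑ j ∈ S, Real.exp (δ j) := by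
  set s := (∑ j ∈ S, δ j) / S.card with hs
  have hsum : ∑ j ∈ S, δ j = S.card * s := by
    rw [hs]; field_simp
  have h1 : ∀ j ∈ S, Real.exp s * (δ j - s + 1) ≤ Real.exp (δ j) := by
    intro j _
    have := Real.add_one_le_exp (δ j - s)
    calc Real.exp s * (δ j - s + 1) ≤ Real.exp s * Real.exp (δ j - s) :=
          mul_le_mul_of_nonneg_left this (Real.exp_pos s).le
      _ = Real.exp (δ j) := by rw [← Real.exp_add]; ring_nf
  calc (S.card : ℝ) * Real.exp s = ∑ j ∈ S, Real.exp s * (δ j - s + 1) := by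
        rw [← Finset.mul_sum]
        have h2 : ∑ j ∈ S, (δ j - s + 1) = (S.card : ℝ) := by
          rw [Finset.sum_add_distrib, Finset.sum_sub_distrib, hsum, Finset.sum_const,
            Finset.sum_const]
          simp [nsmul_eq_mul]
        rw [h2]; ring
    _ ≤ ∑ j ∈ S, Real.exp (δ j) := Finset.sum_le_sum h1

private lemma sum_exp_eq {α : Type*} {S : Finset α} (δ : α → ℝ) (hS : 0 < (S.card : ℝ))
    (heq : ∑ j ∈ S, Real.exp (δ j) = (S.card : ℝ) * Real.exp ((∑ j ∈ S, δ j) / S.card)) :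
    ∀ j ∈ S, δ j = (∑ j ∈ S, δ j) / S.card := by
  set s := (∑ j ∈ S, δ j) / S.card with hs
  have hsum : ∑ j ∈ S, δ j = S.card * s := by rw [hs]; field_simp
  have h1 : ∀ j ∈ S, Real.exp s * (δ j - s + 1) ≤ Real.exp (δ j) := by
    intro j _
    have := Real.add_one_le_exp (δ j - s)
    calc Real.exp s * (δ j - s + 1) ≤ Real.exp s * Real.exp (δ j - s) :=
          mul_le_mul_of_nonneg_left this (Real.exp_pos s).le
      _ = Real.exp (δ j) := by rw [← Real.exp_add]; ring_nf
  have h3 : ∑ j ∈ S, Real.exp s * (δ j - s + 1) = (S.card : ℝ) * Real.exp s := by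
    rw [← Finset.mul_sum]
    have h2 : ∑ j ∈ S, (δ j - s + 1) = (S.card : ℝ) := by
      rw [Finset.sum_add_distrib, Finset.sum_sub_distrib, hsum, Finset.sum_const,
        Finset.sum_const]
      simp [nsmul_eq_mul]
    rw [h2]; ring
  have h4 : ∑ j ∈ S, Real.exp (δ j) = ∑ j ∈ S, Real.exp s * (δ j - s + 1) := by
    rw [h3, heq]
  have h5 := (Finset.sum_eq_sum_iff_of_le h1).1 h4.symm
  intro j hj
  by_contra hne
  have hne' : δ j - s ≠ 0 := fun h => hne (by linarith [sub_eq_zero.mp h])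
  have := Real.add_one_lt_exp hne'
  have h6 := h5 j hj
  have : Real.exp s * (δ j - s + 1) < Real.exp s * Real.exp (δ j - s) :=
    mul_lt_mul_of_pos_left this (Real.exp_pos s)
  rw [← Real.exp_add] at this
  have h7 : s + (δ j - s) = δ j := by ring
  rw [h7] at this
  linarith [h6.ge, this]

open scoped RealInnerProductSpace in
private lemma geo {n d : ℕ} (hn : 2 ≤ n) (u v : Fin n → EuclideanSpace ℝ (Fin d))
    (hu : ∀ i, ‖u i‖ = 1) (hv : ∀ i, ‖v i‖ = 1) :
    (∑ i, ⟪v i, (n:ℝ) • u i - ∑ j, u j⟫) ≤ (n:ℝ)^2 ∧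
    ((∑ i, ⟪v i, (n:ℝ) • u i - ∑ j, u j⟫) = (n:ℝ)^2 → ∀ i, v i = u i) := by
  have hnR : (2:ℝ) ≤ (n:ℝ) := by exact_mod_cast hn
  set S : EuclideanSpace ℝ (Fin d) := ∑ j, u j with hS
  set q : Fin n → ℝ := fun i => ⟪v i, (n:ℝ) • u i - S⟫ with hq
  set r : Fin n → ℝ := fun i => ‖(n:ℝ) • u i - S‖ with hr
  have hqr : ∀ i, q i ≤ r i := by
    intro i
    calc q i ≤ ‖v i‖ * ‖(n:ℝ) • u i - S‖ := real_inner_le_norm _ _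
      _ = r i := by rw [hv i, one_mul]
  have hrnn : ∀ i, 0 ≤ r i := fun i => norm_nonneg _
  have hiS : ∑ i, ⟪u i, S⟫ = ‖S‖^2 := by
    rw [← sum_inner, ← hS, real_inner_self_eq_norm_sq]
  have hr2 : ∑ i, (r i)^2 = (n:ℝ)^3 - (n:ℝ) * ‖S‖^2 := by
    have : ∀ i, (r i)^2 = (n:ℝ)^2 - 2 * ((n:ℝ) * ⟪u i, S⟫) + ‖S‖^2 := by
      intro i
      rw [hr]
      simp only
      rw [norm_sub_sq_real, norm_smul, real_inner_smul_left, hu i]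
      simp [abs_of_nonneg (by linarith : (0:ℝ) ≤ (n:ℝ))]
    have e1 : ∑ i : Fin n, (2 * ((n:ℝ) * ⟪u i, S⟫)) = 2 * ((n:ℝ) * ‖S‖^2) := by
      rw [← Finset.mul_sum, ← Finset.mul_sum, hiS]
    rw [Finset.sum_congr rfl (fun i _ => this i), Finset.sum_add_distrib,
      Finset.sum_sub_distrib, e1, Finset.sum_const, Finset.sum_const]
    simp [Finset.card_univ, nsmul_eq_mul]
    ring
  have hcs : (∑ i, r i)^2 ≤ (n:ℝ) * ∑ i, (r i)^2 := by
    have := sq_sum_le_card_mul_sum_sq (s := Finset.univ) (f := r)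
    simpa [Finset.card_univ] using this
  have hnormS : 0 ≤ ‖S‖^2 := by positivity
  have hsumr : ∑ i, r i ≤ (n:ℝ)^2 := by
    nlinarith [Finset.sum_nonneg (fun i (_ : i ∈ Finset.univ) => hrnn i)]
  have hsumq : ∑ i, q i ≤ ∑ i, r i := Finset.sum_le_sum (fun i _ => hqr i)
  refine ⟨le_trans hsumq hsumr, ?_⟩
  intro heq
  have hreq : ∑ i, r i = (n:ℝ)^2 := le_antisymm hsumr (heq ▸ hsumq)
  have hnpos : (0:ℝ) < (n:ℝ) := by linarith
  have hSzero : S = 0 := by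
    have h0 : (n:ℝ) * ((n:ℝ) * ‖S‖^2) ≤ (n:ℝ) * ((n:ℝ) * 0) := by nlinarith
    have h1 : (n:ℝ) * ‖S‖^2 ≤ (n:ℝ) * 0 := (mul_le_mul_iff_right₀ hnpos).mp h0
    have h2 : ‖S‖^2 ≤ 0 := (mul_le_mul_iff_right₀ hnpos).mp h1
    have h3 : ‖S‖^2 = 0 := le_antisymm h2 hnormS
    have h4 : ‖S‖ = 0 := pow_eq_zero_iff two_ne_zero |>.mp h3
    exact norm_eq_zero.mp h4
  have hqreq : ∀ i, q i = r i := by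
    have h4 : ∑ i, q i = ∑ i, r i := by rw [hreq]; exact heq
    intro i
    exact ((Finset.sum_eq_sum_iff_of_le (fun i _ => hqr i)).1 h4 i (Finset.mem_univ i))
  intro i
  have hq1 : q i = (n:ℝ) * ⟪v i, u i⟫ := by
    rw [hq]; simp only
    rw [hSzero, sub_zero, real_inner_smul_right]
  have hr1 : r i = (n:ℝ) := by
    rw [hr]; simp only
    rw [hSzero, sub_zero, norm_smul, hu i]
    simp [abs_of_nonneg (by linarith : (0:ℝ) ≤ (n:ℝ))]
  have hvu : ⟪v i, u i⟫ = 1 := by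
    have := hqreq i
    rw [hq1, hr1] at this
    have hn0 : (n:ℝ) ≠ 0 := by linarith
    have h5 : (n:ℝ) * ⟪v i, u i⟫ = (n:ℝ) * 1 := by rw [mul_one]; exact this
    exact mul_left_cancel₀ hn0 h5
  have : ‖v i - u i‖^2 = 0 := by
    rw [norm_sub_sq_real, hv i, hu i, hvu]; ring
  have : ‖v i - u i‖ = 0 := pow_eq_zero_iff two_ne_zero |>.mp this
  have := norm_eq_zero.mp this
  exact sub_eq_zero.mp this


set_option maxHeartbeats 2000000 in
/-- For `n ≥ 2`, `d ≥ n - 1` and unit vectors `u i, v i` in `ℝ^d`, the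
cross-entropy loss `L(u,v) = ∑ i, log ((∑ j, exp ⟪v j, u i⟫) / exp ⟪v i, u i⟫)` is bounded
below by `n * log (1 + (n-1) * exp (-n/(n-1)))`, with equality iff `v = u` and the `u i`
form a simplex equiangular tight frame. -/
theorem cross_entropy_min_simplex_ETF (n d : ℕ) (hn : 2 ≤ n) (hd : n - 1 ≤ d)
    (u v : Fin n → EuclideanSpace ℝ (Fin d))
    (hu : ∀ i, ‖u i‖ = 1) (hv : ∀ i, ‖v i‖ = 1) :
    (n : ℝ) * Real.log (1 + ((n : ℝ) - 1) * Real.exp (-(n : ℝ) / ((n : ℝ) - 1))) ≤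
      (∑ i, Real.log ((∑ j, Real.exp ⟪v j, u i⟫) / Real.exp ⟪v i, u i⟫)) ∧
    ((∑ i, Real.log ((∑ j, Real.exp ⟪v j, u i⟫) / Real.exp ⟪v i, u i⟫)) =
        (n : ℝ) * Real.log (1 + ((n : ℝ) - 1) * Real.exp (-(n : ℝ) / ((n : ℝ) - 1))) ↔
      (∀ i, v i = u i) ∧ ∀ i j, i ≠ j → ⟪u i, u j⟫ = -1 / ((n : ℝ) - 1)) := by
  classical
  have hn1 : 1 ≤ n := by omega
  have hc : (2:ℝ) ≤ (n:ℝ) := by exact_mod_cast hn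
  have hm : (0:ℝ) < (n:ℝ) - 1 := by linarith
  set m : ℝ := (n:ℝ) - 1 with hm_def
  set t₀ : ℝ := -(n:ℝ) / m with ht_def
  set B : ℝ := m * Real.exp t₀ with hB_def
  have hB : 0 < B := mul_pos hm (Real.exp_pos _)
  have hA : (0:ℝ) < 1 + B := by linarith
  set k : ℝ := B / (1 + B) with hk_def
  have hk0 : 0 < k := div_pos hB hA
  set Z : Fin n → ℝ := fun i => ∑ j ∈ Finset.univ.erase i,
    Real.exp (⟪v j, u i⟫ - ⟪v i, u i⟫) with hZ_def
  set s : Fin n → ℝ := fun i => (∑ j ∈ Finset.univ.erase i,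
    (⟪v j, u i⟫ - ⟪v i, u i⟫)) / m with hs_def
  have hmt : m * t₀ = -(n:ℝ) := by
    rw [ht_def, mul_comm, div_mul_cancel₀ _ hm.ne']
  have ht1 : 1 + t₀ = -1 / m := by
    rw [eq_div_iff hm.ne']
    linear_combination hmt + hm_def
  have hcard : ∀ i : Fin n, ((Finset.univ.erase i).card : ℝ) = m := by
    intro i
    rw [Finset.card_erase_of_mem (Finset.mem_univ i), Finset.card_univ, Fintype.card_fin,
      Nat.cast_sub hn1, Nat.cast_one]
  have hBe : ∀ w : ℝ, B * Real.exp (w - t₀) = m * Real.exp w := by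
    intro w
    rw [hB_def, mul_assoc, ← Real.exp_add]
    congr 2
    ring
  have hZpos : ∀ i, 0 ≤ Z i :=
    fun i => Finset.sum_nonneg fun j _ => (Real.exp_pos _).le
  -- rewriting of the loss
  have hLZ : ∀ i, Real.log ((∑ j, Real.exp ⟪v j, u i⟫) / Real.exp ⟪v i, u i⟫)
      = Real.log (1 + Z i) := by
    intro i
    have hpos : 0 < ∑ j, Real.exp ⟪v j, u i⟫ :=
      Finset.sum_pos (fun j _ => Real.exp_pos _) ⟨i, Finset.mem_univ i⟩
    have h1 : (1:ℝ) + Z i = ∑ j, Real.exp (⟪v j, u i⟫ - ⟪v i, u i⟫) := by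
      rw [← Finset.sum_erase_add Finset.univ _ (Finset.mem_univ i), sub_self, Real.exp_zero,
        add_comm]
    have h2 : ∑ j, Real.exp (⟪v j, u i⟫ - ⟪v i, u i⟫)
        = (∑ j, Real.exp ⟪v j, u i⟫) * Real.exp (-⟪v i, u i⟫) := by
      rw [Finset.sum_mul]
      exact Finset.sum_congr rfl fun j _ => by rw [← Real.exp_add]; ring_nf
    rw [h1, h2, Real.log_mul hpos.ne' (Real.exp_pos _).ne', Real.log_exp,
      Real.log_div hpos.ne' (Real.exp_pos _).ne', Real.log_exp]
    ring
  -- Jensen for exp per i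
  have hZm : ∀ i, m * Real.exp (s i) ≤ Z i := by
    intro i
    have h := sum_exp_ge (S := Finset.univ.erase i)
      (fun j => ⟪v j, u i⟫ - ⟪v i, u i⟫) (by rw [hcard i]; exact hm)
    rw [hcard i] at h
    exact h
  -- the per-index key inequality
  have hkeyi : ∀ i, Real.log (1 + B) + k * (s i - t₀) ≤ Real.log (1 + Z i) := by
    intro i
    have h1 := logG_ge hB (s i - t₀)
    have h2 : 1 + B * Real.exp (s i - t₀) ≤ 1 + Z i := by
      rw [hBe (s i)]; linarith [hZm i]
    have hp : (0:ℝ) < 1 + B * Real.exp (s i - t₀) := by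
      linarith [mul_pos hB (Real.exp_pos (s i - t₀))]
    have h3 := Real.log_le_log hp h2
    rw [hk_def]
    linarith
  -- sum identities
  have hms : ∀ i, m * (s i) = (∑ j, ⟪v j, u i⟫) - (n:ℝ) * ⟪v i, u i⟫ := by
    intro i
    have h0 : m * s i = ∑ j ∈ Finset.univ.erase i, (⟪v j, u i⟫ - ⟪v i, u i⟫) := by
      rw [hs_def]
      field_simp
    have h1 : ∑ j ∈ Finset.univ.erase i, (⟪v j, u i⟫ - ⟪v i, u i⟫)
        = (∑ j ∈ Finset.univ.erase i, ⟪v j, u i⟫) - m * ⟪v i, u i⟫ := by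
      rw [Finset.sum_sub_distrib, Finset.sum_const, nsmul_eq_mul, hcard i]
    have h2 := Finset.sum_erase_add Finset.univ (fun j => ⟪v j, u i⟫) (Finset.mem_univ i)
    have hmn : (n:ℝ) = m + 1 := by rw [hm_def]; ring
    rw [h0, h1, hmn]
    linarith
  have hGQ : ∑ i, ⟪v i, (n:ℝ) • u i - ∑ j, u j⟫
      = (n:ℝ) * (∑ i, ⟪v i, u i⟫) - ∑ i, (∑ j, ⟪v j, u i⟫) := by
    have e1 : ∀ i : Fin n, ⟪v i, (n:ℝ) • u i - ∑ j, u j⟫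
        = (n:ℝ) * ⟪v i, u i⟫ - ∑ j, ⟪v i, u j⟫ := by
      intro i
      rw [inner_sub_right, real_inner_smul_right, inner_sum]
    rw [Finset.sum_congr rfl fun i _ => e1 i, Finset.sum_sub_distrib, ← Finset.mul_sum,
      Finset.sum_comm]
  have hsum : m * (∑ i, (s i - t₀))
      = (n:ℝ)^2 - ((n:ℝ) * (∑ i, ⟪v i, u i⟫) - ∑ i, (∑ j, ⟪v j, u i⟫)) := by
    have e2 : m * (∑ i, (s i - t₀)) = (∑ i, m * s i) - (n:ℝ) * (m * t₀) := by
      rw [Finset.mul_sum]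
      rw [Finset.sum_congr rfl fun i _ => mul_sub m (s i) t₀, Finset.sum_sub_distrib,
        Finset.sum_const, Finset.card_univ, Fintype.card_fin, nsmul_eq_mul]
    rw [e2, Finset.sum_congr rfl fun i _ => hms i, Finset.sum_sub_distrib, ← Finset.mul_sum,
      hmt]
    ring
  obtain ⟨hgeo₁, hgeo₂⟩ := geo hn u v hu hv
  have h3 : 0 ≤ ∑ i, (s i - t₀) := by
    have h4 : 0 ≤ m * ∑ i, (s i - t₀) := by rw [hsum]; rw [hGQ] at hgeo₁; linarith
    nlinarith
  have hsum_split : ∑ i, (Real.log (1 + B) + k * (s i - t₀))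
      = (n:ℝ) * Real.log (1 + B) + k * ∑ i, (s i - t₀) := by
    rw [Finset.sum_add_distrib, Finset.sum_const, Finset.card_univ, Fintype.card_fin,
      nsmul_eq_mul, ← Finset.mul_sum]
  have hlow : (n:ℝ) * Real.log (1 + B) ≤ ∑ i, Real.log (1 + Z i) := by
    have h1 : ∑ i, (Real.log (1 + B) + k * (s i - t₀)) ≤ ∑ i, Real.log (1 + Z i) :=
      Finset.sum_le_sum fun i _ => hkeyi i
    rw [hsum_split] at h1
    nlinarith [mul_nonneg hk0.le h3]
  have hsumL : (∑ i, Real.log ((∑ j, Real.exp ⟪v j, u i⟫) / Real.exp ⟪v i, u i⟫))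
      = ∑ i, Real.log (1 + Z i) := Finset.sum_congr rfl fun i _ => hLZ i
  refine ⟨by rw [hsumL]; exact hlow, ?_, ?_⟩
  · -- forward direction of the iff
    intro heq
    rw [hsumL] at heq
    have hG0 : ∀ i ∈ Finset.univ,
        0 ≤ Real.log (1 + Z i) - (Real.log (1 + B) + k * (s i - t₀)) :=
      fun i _ => by linarith [hkeyi i]
    have hsum0 : ∑ i, (Real.log (1 + Z i) - (Real.log (1 + B) + k * (s i - t₀)))
        = -(k * ∑ i, (s i - t₀)) := by
      rw [Finset.sum_sub_distrib, heq, hsum_split]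
      ring
    have hge : 0 ≤ ∑ i, (Real.log (1 + Z i) - (Real.log (1 + B) + k * (s i - t₀))) :=
      Finset.sum_nonneg hG0
    have hs0 : ∑ i, (s i - t₀) = 0 := by
      rw [hsum0] at hge
      nlinarith
    have hslack0 := (Finset.sum_eq_zero_iff_of_nonneg hG0).1 (by rw [hsum0, hs0]; ring)
    -- v = u
    have hGQ2 : (n:ℝ) * (∑ i, ⟪v i, u i⟫) - ∑ i, (∑ j, ⟪v j, u i⟫) = (n:ℝ)^2 := by
      rw [hs0, mul_zero] at hsum
      linarith
    have hvu : ∀ i, v i = u i := hgeo₂ (by rw [hGQ]; exact hGQ2)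
    have hii : ∀ i, ⟪u i, u i⟫ = (1:ℝ) := by
      intro i
      rw [real_inner_self_eq_norm_sq, hu i, one_pow]
    refine ⟨hvu, ?_⟩
    intro i j hij
    -- per-i equality analysis
    have hsl := hslack0 i (Finset.mem_univ i)
    have heq1 : Real.log (1 + Z i) = Real.log (1 + B) + k * (s i - t₀) := by linarith
    have hp : (0:ℝ) < 1 + B * Real.exp (s i - t₀) := by
      linarith [mul_pos hB (Real.exp_pos (s i - t₀))]
    have hle1 : Real.log (1 + B * Real.exp (s i - t₀)) ≤ Real.log (1 + Z i) :=
      Real.log_le_log hp (by rw [hBe (s i)]; linarith [hZm i])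
    have hw : s i - t₀ = 0 := by
      by_contra hne
      have := logG_lt hB hne
      rw [← hk_def] at this
      linarith
    have hZeq : Z i = m * Real.exp (s i) := by
      by_contra hne
      have hlt : m * Real.exp (s i) < Z i := lt_of_le_of_ne (hZm i) (Ne.symm hne)
      have h5 : Real.log (1 + B * Real.exp (s i - t₀)) < Real.log (1 + Z i) :=
        Real.log_lt_log hp (by rw [hBe (s i)]; linarith)
      have h6 := logG_ge hB (s i - t₀)
      rw [← hk_def] at h6
      linarith
    have hJ := sum_exp_eq (S := Finset.univ.erase i)
      (fun j => ⟪v j, u i⟫ - ⟪v i, u i⟫) (by rw [hcard i]; exact hm)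
      (by rw [hcard i]; exact hZeq)
    have hj : j ∈ Finset.univ.erase i := Finset.mem_erase.2 ⟨hij.symm, Finset.mem_univ j⟩
    have hδ := hJ j hj
    rw [hcard i] at hδ
    -- hδ : ⟪v j, u i⟫ - ⟪v i, u i⟫ = s i (as the quotient)
    have hδ' : ⟪v j, u i⟫ - ⟪v i, u i⟫ = t₀ := by
      rw [hδ]
      show s i = t₀
      linarith
    rw [hvu j, hvu i, hii i] at hδ'
    have h9 : ⟪u j, u i⟫ = 1 + t₀ := by linarith
    rw [real_inner_comm] at h9
    rw [h9, ht1]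
  · -- converse
    rintro ⟨hvu, hETF⟩
    rw [hsumL]
    have hii : ∀ i, ⟪u i, u i⟫ = (1:ℝ) := by
      intro i
      rw [real_inner_self_eq_norm_sq, hu i, one_pow]
    have hZB : ∀ i, Z i = B := by
      intro i
      have e1 : ∀ j ∈ Finset.univ.erase i,
          Real.exp (⟪v j, u i⟫ - ⟪v i, u i⟫) = Real.exp t₀ := by
        intro j hj
        have hji : j ≠ i := (Finset.mem_erase.1 hj).1
        rw [hvu j, hvu i, hii i, real_inner_comm, hETF i j (Ne.symm hji)]
        congr 1
        linarith [ht1]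
      calc Z i = ∑ j ∈ Finset.univ.erase i, Real.exp t₀ :=
            Finset.sum_congr rfl e1
        _ = ((Finset.univ.erase i).card : ℝ) * Real.exp t₀ := by
            rw [Finset.sum_const, nsmul_eq_mul]
        _ = B := by rw [hcard i, hB_def]
    rw [Finset.sum_congr rfl fun i (_ : i ∈ Finset.univ) => by rw [hZB i],
      Finset.sum_const, Finset.card_univ, Fintype.card_fin, nsmul_eq_mul]
end

section
/- Let n ≥ 2 and d ≥ n − 1 be integers and let α > 0. For unit vectors u_1, …, u_n in ℝ^d, define L_α(u) = Σ_{i=1}^n log( 1 + Σ_{j≠i} e^{α(⟨u_j, u_i⟩ − 1)} ). Then L_α(u) ≥ n·log(1 + (n−1)·e^{−nα/(n−1)}), and equality holds if and only if ⟨u_i, u_j⟩ = −1/(n−1) for all i ≠ j (i.e., the u_i form a simplex equiangular tight frame). -/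
open scoped RealInnerProductSpace BigOperators

section Aux

variable {c α : ℝ}

private lemma gder (hc : 0 < c) (x : ℝ) :
    HasDerivAt (fun x => Real.log (1 + c * Real.exp (α * (x - 1))))
      (c * α * Real.exp (α * (x - 1)) / (1 + c * Real.exp (α * (x - 1)))) x := by
  have hpos : 0 < 1 + c * Real.exp (α * (x - 1)) := by positivity
  have h1 : HasDerivAt (fun x : ℝ => α * (x - 1)) α x := by
    simpa using ((hasDerivAt_id x).sub_const 1).const_mul α
  have h2 : HasDerivAt (fun x => 1 + c * Real.exp (α * (x - 1)))
      (c * (Real.exp (α * (x - 1)) * α)) x := by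
    exact ((Real.hasDerivAt_exp _).comp x h1).const_mul c |>.const_add 1
  have := h2.log hpos.ne'
  convert this using 1
  ring

private lemma g_strictConvexOn (hc : 0 < c) (hα : 0 < α) :
    StrictConvexOn ℝ Set.univ (fun x => Real.log (1 + c * Real.exp (α * (x - 1)))) := by
  set g : ℝ → ℝ := fun x => Real.log (1 + c * Real.exp (α * (x - 1))) with hg
  have hderiv : deriv g
      = fun x => c * α * Real.exp (α * (x - 1)) / (1 + c * Real.exp (α * (x - 1))) := by
    funext x; exact (gder hc x).deriv
  apply strictConvexOn_univ_of_deriv2_pos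
  · have : Continuous fun x : ℝ => 1 + c * Real.exp (α * (x - 1)) := by continuity
    exact this.log (fun x => by positivity)
  · intro x
    have hpos : 0 < 1 + c * Real.exp (α * (x - 1)) := by positivity
    have h1 : HasDerivAt (fun x : ℝ => α * (x - 1)) α x := by
      simpa using ((hasDerivAt_id x).sub_const 1).const_mul α
    have hE : HasDerivAt (fun x => Real.exp (α * (x - 1))) (Real.exp (α * (x - 1)) * α) x :=
      (Real.hasDerivAt_exp _).comp x h1
    have hnum : HasDerivAt (fun x => c * α * Real.exp (α * (x - 1)))
        (c * α * (Real.exp (α * (x - 1)) * α)) x := hE.const_mul _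
    have hden : HasDerivAt (fun x => 1 + c * Real.exp (α * (x - 1)))
        (c * (Real.exp (α * (x - 1)) * α)) x := (hE.const_mul c).const_add 1
    have hq := hnum.div hden hpos.ne'
    have h2 : deriv (deriv g) x =
        (c * α * (Real.exp (α * (x - 1)) * α) * (1 + c * Real.exp (α * (x - 1)))
          - c * α * Real.exp (α * (x - 1)) * (c * (Real.exp (α * (x - 1)) * α)))
          / (1 + c * Real.exp (α * (x - 1))) ^ 2 := by
      rw [hderiv]; exact hq.deriv
    simp only [Function.iterate_succ, Function.iterate_zero, Function.comp_apply, id]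
    rw [h2]
    have hnum' : c * α * (Real.exp (α * (x - 1)) * α) * (1 + c * Real.exp (α * (x - 1)))
          - c * α * Real.exp (α * (x - 1)) * (c * (Real.exp (α * (x - 1)) * α))
        = c * α ^ 2 * Real.exp (α * (x - 1)) := by ring
    rw [hnum']
    positivity

private lemma g_strictMono (hc : 0 < c) (hα : 0 < α) :
    StrictMono (fun x => Real.log (1 + c * Real.exp (α * (x - 1)))) := by
  intro x y hxy
  have h1 : Real.exp (α * (x - 1)) < Real.exp (α * (y - 1)) := by
    apply Real.exp_lt_exp.2; nlinarith
  have : (0:ℝ) < 1 + c * Real.exp (α * (x - 1)) := by positivity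
  apply Real.log_lt_log this
  nlinarith

end Aux

/-- For `n ≥ 2`, `d ≥ n - 1`, `α > 0` and unit vectors `u i` in `ℝ^d`, the
symmetric loss `L_α(u) = ∑ i, log (1 + ∑_{j ≠ i} exp (α (⟪u j, u i⟫ - 1)))` is bounded below
by `n * log (1 + (n-1) * exp (-nα/(n-1)))`, with equality iff the `u i` form a simplex
equiangular tight frame. -/
theorem symmetric_loss_min_simplex_ETF (n d : ℕ) (hn : 2 ≤ n) (hd : n - 1 ≤ d)
    (α : ℝ) (hα : 0 < α)
    (u : Fin n → EuclideanSpace ℝ (Fin d)) (hu : ∀ i, ‖u i‖ = 1) :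
    (n : ℝ) * Real.log (1 + ((n : ℝ) - 1) * Real.exp (-((n : ℝ) * α) / ((n : ℝ) - 1))) ≤
      (∑ i, Real.log (1 + ∑ j ∈ Finset.univ.erase i, Real.exp (α * (⟪u j, u i⟫ - 1)))) ∧
    ((∑ i, Real.log (1 + ∑ j ∈ Finset.univ.erase i, Real.exp (α * (⟪u j, u i⟫ - 1)))) =
        (n : ℝ) * Real.log (1 + ((n : ℝ) - 1) * Real.exp (-((n : ℝ) * α) / ((n : ℝ) - 1))) ↔
      ∀ i j, i ≠ j → ⟪u i, u j⟫ = -1 / ((n : ℝ) - 1)) := by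
  classical
  have hn1 : (1:ℕ) ≤ n := le_trans (by norm_num) hn
  set N : ℝ := (n : ℝ) with hN
  have hN2 : (2:ℝ) ≤ N := by rw [hN]; exact_mod_cast hn
  set c : ℝ := N - 1 with hcdef
  have hc : 0 < c := by simp only [hcdef]; linarith
  have hNpos : (0:ℝ) < N := by linarith
  set g : ℝ → ℝ := fun x => Real.log (1 + c * Real.exp (α * (x - 1))) with hgdef
  -- rewrite RHS as N * g m
  set m : ℝ := -1 / c with hmdef
  have hm : -((N : ℝ) * α) / c = α * (m - 1) := by
    field_simp [hmdef]
    have hcm : c * m = -1 := by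
      rw [hmdef, mul_div_assoc', mul_neg_one, neg_div, div_self hc.ne']
    linarith [hcdef]
  have hcard : ∀ i : Fin n, (Finset.univ.erase i).card = n - 1 := by
    intro i
    rw [Finset.card_erase_of_mem (Finset.mem_univ i)]
    simp
  have hcastc : ((n - 1 : ℕ) : ℝ) = c := by
    rw [Nat.cast_sub hn1]; simp [hcdef, hN]
  -- t and s
  set t : Fin n → Fin n → ℝ := fun i j => ⟪u j, u i⟫ with htdef
  set s : Fin n → ℝ := fun i => (∑ j ∈ Finset.univ.erase i, t i j) / c with hsdef
  have hsumw : ∀ i : Fin n,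
      ∑ j ∈ Finset.univ.erase i, (1 / c) * (α * (t i j - 1)) = α * (s i - 1) := by
    intro i
    have h1 : ∑ j ∈ Finset.univ.erase i, (1 / c) * (α * (t i j - 1))
        = (∑ j ∈ Finset.univ.erase i, α * t i j - ∑ _j ∈ Finset.univ.erase i, (α:ℝ)) / c := by
      rw [← Finset.sum_sub_distrib, Finset.sum_div]
      apply Finset.sum_congr rfl
      intro j _
      ring
    rw [h1, Finset.sum_const, hcard, nsmul_eq_mul, hcastc, ← Finset.mul_sum]
    have h2 : s i = (∑ j ∈ Finset.univ.erase i, t i j) / c := rfl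
    rw [h2]
    field_simp
  -- Step A
  have stepA : ∀ i : Fin n,
      g (s i) ≤ Real.log (1 + ∑ j ∈ Finset.univ.erase i, Real.exp (α * (t i j - 1))) := by
    intro i
    have hjensen := convexOn_exp.map_sum_le (t := Finset.univ.erase i)
      (w := fun _ => 1 / c) (p := fun j => α * (t i j - 1))
      (fun _ _ => by positivity)
      (by rw [Finset.sum_const, hcard, nsmul_eq_mul, hcastc]; field_simp)
      (fun _ _ => Set.mem_univ _)
    simp only [smul_eq_mul] at hjensen
    rw [hsumw i, ← Finset.mul_sum] at hjensen
    have h3 : c * Real.exp (α * (s i - 1))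
        ≤ ∑ j ∈ Finset.univ.erase i, Real.exp (α * (t i j - 1)) := by
      rw [div_mul_eq_mul_div, le_div_iff₀ hc] at hjensen
      nlinarith
    apply Real.log_le_log (by positivity)
    linarith
  -- Step A equality case
  have stepAeq : ∀ i : Fin n,
      g (s i) = Real.log (1 + ∑ j ∈ Finset.univ.erase i, Real.exp (α * (t i j - 1))) →
      ∀ j ∈ Finset.univ.erase i, t i j = s i := by
    intro i heq j hj
    have hpos1 : (0:ℝ) < 1 + c * Real.exp (α * (s i - 1)) := by positivity
    have hpos2 : (0:ℝ) < 1 + ∑ j ∈ Finset.univ.erase i, Real.exp (α * (t i j - 1)) := by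
      have : (0:ℝ) ≤ ∑ j ∈ Finset.univ.erase i, Real.exp (α * (t i j - 1)) :=
        Finset.sum_nonneg fun _ _ => (Real.exp_pos _).le
      linarith
    have heq' : c * Real.exp (α * (s i - 1))
        = ∑ j ∈ Finset.univ.erase i, Real.exp (α * (t i j - 1)) := by
      have := Real.log_injOn_pos (Set.mem_Ioi.2 hpos1) (Set.mem_Ioi.2 hpos2) heq
      linarith
    -- now Jensen equality for exp
    have hiff := strictConvexOn_exp.map_sum_eq_iff (t := Finset.univ.erase i)
      (w := fun _ => 1 / c) (p := fun k => α * (t i k - 1))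
      (fun _ _ => by positivity)
      (by rw [Finset.sum_const, hcard, nsmul_eq_mul, hcastc]; field_simp)
      (fun _ _ => Set.mem_univ _)
    simp only [smul_eq_mul] at hiff
    rw [hsumw i] at hiff
    have heq'' : Real.exp (α * (s i - 1))
        = ∑ k ∈ Finset.univ.erase i, (1 / c) * Real.exp (α * (t i k - 1)) := by
      rw [← Finset.mul_sum, ← heq']
      field_simp
    have := (hiff.1 heq'') j hj
    have hα' : α ≠ 0 := ne_of_gt hα
    have : t i j - 1 = s i - 1 := by
      apply mul_left_cancel₀ hα'
      exact this
    linarith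
  -- Step B: Jensen for g
  set sbar : ℝ := (∑ i, s i) / N with hsbardef
  have hwN : ∑ _i : Fin n, (1 / N) = 1 := by
    rw [Finset.sum_const, nsmul_eq_mul, Finset.card_univ, Fintype.card_fin]
    field_simp
    exact hN.symm
  have hsbarsum : ∑ i, (1 / N) * s i = sbar := by
    rw [← Finset.mul_sum, hsbardef]
    field_simp
  have stepB : N * g sbar ≤ ∑ i, g (s i) := by
    have := (g_strictConvexOn hc hα).convexOn.map_sum_le (t := Finset.univ)
      (w := fun _ => 1 / N) (p := s) (fun _ _ => by positivity) hwN (fun _ _ => Set.mem_univ _)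
    simp only [smul_eq_mul] at this
    rw [hsbarsum, ← Finset.mul_sum] at this
    calc N * g sbar = N * (g sbar) := rfl
      _ ≤ N * ((1 / N) * ∑ i, g (s i)) := by apply mul_le_mul_of_nonneg_left this hNpos.le
      _ = ∑ i, g (s i) := by field_simp
  have stepBeq : N * g sbar = ∑ i, g (s i) → ∀ i, s i = sbar := by
    intro heq i
    have hiff := (g_strictConvexOn hc hα).map_sum_eq_iff (t := Finset.univ)
      (w := fun _ => 1 / N) (p := s) (fun _ _ => by positivity) hwN (fun _ _ => Set.mem_univ _)
    simp only [smul_eq_mul] at hiff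
    rw [hsbarsum] at hiff
    have heq2 : g sbar = ∑ i, (1 / N) * g (s i) := by
      rw [← Finset.mul_sum, ← heq]
      field_simp
    have := (hiff.1 heq2) i (Finset.mem_univ i)
    exact this
  -- Step C: sbar ≥ m
  have hident : ∑ i, ∑ j ∈ Finset.univ.erase i, t i j = ‖∑ i, u i‖ ^ 2 - N := by
    have h1 : ⟪∑ j, u j, ∑ i, u i⟫ = ∑ i, ∑ j, t i j := by
      rw [inner_sum]
      congr 1
      funext i
      rw [sum_inner]
    have h2 : ∀ i : Fin n, ∑ j, t i j = 1 + ∑ j ∈ Finset.univ.erase i, t i j := by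
      intro i
      rw [← Finset.add_sum_erase _ _ (Finset.mem_univ i)]
      congr 1
      have := real_inner_self_eq_norm_sq (u i)
      rw [htdef]
      simp only
      rw [real_inner_self_eq_norm_sq, hu i]
      norm_num
    have h3 : ⟪∑ j, u j, ∑ i, u i⟫ = ‖∑ i, u i‖ ^ 2 := real_inner_self_eq_norm_sq _
    have h4 : ∑ i, ∑ j, t i j = N + ∑ i, ∑ j ∈ Finset.univ.erase i, t i j := by
      rw [Finset.sum_congr rfl (fun i _ => h2 i), Finset.sum_add_distrib]
      simp [hN]
    rw [h4, h3] at h1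
    linarith
  have hsbarge : m ≤ sbar := by
    have h1 : ∑ i, s i = (‖∑ i, u i‖ ^ 2 - N) / c := by
      rw [hsdef]
      simp only
      rw [← Finset.sum_div, hident]
    have h2 : (0:ℝ) ≤ ‖∑ i, u i‖ ^ 2 := sq_nonneg _
    rw [hsbardef, h1, hmdef, div_div]
    rw [div_le_div_iff₀ hc (by positivity)]
    nlinarith [mul_nonneg hc.le h2]
  have stepC : N * g m ≤ N * g sbar := by
    apply mul_le_mul_of_nonneg_left _ hNpos.le
    exact (g_strictMono hc hα).monotone hsbarge
  -- the total L
  set L : ℝ := ∑ i, Real.log (1 + ∑ j ∈ Finset.univ.erase i, Real.exp (α * (t i j - 1))) with hL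
  have hCL : ∑ i, g (s i) ≤ L := Finset.sum_le_sum fun i _ => stepA i
  have hRHS : (N : ℝ) * Real.log (1 + c * Real.exp (-(N * α) / c)) = N * g m := by
    rw [hgdef]; simp only; rw [hm]
  have hmain : N * g m ≤ L := le_trans stepC (le_trans stepB hCL)
  constructor
  · rw [hRHS]; exact hmain
  constructor
  · -- forward
    intro heq
    rw [hRHS] at heq
    have hBC : N * g sbar = ∑ i, g (s i) := by
      have h1 := stepB
      have h2 := stepC
      linarith [hCL]
    have hAB : N * g m = N * g sbar := by linarith [hCL, stepB]
    have hCLe : ∑ i, g (s i) = L := by linarith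
    have hsm : sbar = m := by
      have : g m = g sbar := by
        have := mul_left_cancel₀ (ne_of_gt hNpos) hAB
        exact this
      exact ((g_strictMono hc hα).injective this.symm)
    have hsi : ∀ i, s i = sbar := stepBeq hBC
    have hterm : ∀ i : Fin n,
        g (s i) = Real.log (1 + ∑ j ∈ Finset.univ.erase i, Real.exp (α * (t i j - 1))) := by
      intro i
      by_contra hne
      have hlt : g (s i) < Real.log (1 + ∑ j ∈ Finset.univ.erase i, Real.exp (α * (t i j - 1))) :=
        lt_of_le_of_ne (stepA i) hne
      have : ∑ i, g (s i) < L := by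
        rw [hL]
        apply Finset.sum_lt_sum (fun j _ => stepA j) ⟨i, Finset.mem_univ i, hlt⟩
      linarith
    intro i j hij
    have hji : i ∈ Finset.univ.erase j := Finset.mem_erase.2 ⟨hij, Finset.mem_univ i⟩
    have := stepAeq j (hterm j) i hji
    rw [hsi j, hsm] at this
    rw [hmdef] at this
    exact this
  · -- reverse
    intro hETF
    rw [hRHS]
    have hterm : ∀ i : Fin n,
        (1 + ∑ j ∈ Finset.univ.erase i, Real.exp (α * (t i j - 1)))
          = 1 + c * Real.exp (α * (m - 1)) := by
      intro i
      congr 1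
      have hval : ∀ j ∈ Finset.univ.erase i, Real.exp (α * (t i j - 1))
          = Real.exp (α * (m - 1)) := by
        intro j hj
        have hji : j ≠ i := (Finset.mem_erase.1 hj).1
        have := hETF j i hji
        rw [htdef]
        simp only
        rw [this, hmdef]
      rw [Finset.sum_congr rfl hval, Finset.sum_const, hcard, nsmul_eq_mul, hcastc]
    rw [hL]
    have : ∀ i : Fin n,
        Real.log (1 + ∑ j ∈ Finset.univ.erase i, Real.exp (α * (t i j - 1))) = g m := by
      intro i
      rw [hterm i, hgdef]
    rw [Finset.sum_congr rfl (fun i _ => this i), Finset.sum_const, Finset.card_univ,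
      Fintype.card_fin, nsmul_eq_mul, hN]
end

section
/- Let n ≥ 2, d ≥ 1 be integers and let α > 0. For any unit vectors u_1, …, u_n in ℝ^d, the loss L_α(u) = Σ_{i=1}^n log( 1 + Σ_{j≠i} e^{α(⟨u_j, u_i⟩ − 1)} ) satisfies the lower bound L_α(u) ≥ n·log(1 + (n−1)·e^{−nα/(n−1)}). -/
open scoped RealInnerProductSpace BigOperators

lemma convexOn_log_one_add_mul_exp {c : ℝ} (hc : 0 < c) :
    ConvexOn ℝ Set.univ (fun t => Real.log (1 + c * Real.exp t)) := by
  have hpos : ∀ t : ℝ, 0 < 1 + c * Real.exp t := fun t => by positivity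
  apply convexOn_of_hasDerivWithinAt2_nonneg convex_univ
    (f' := fun t => c * Real.exp t / (1 + c * Real.exp t))
    (f'' := fun t => c * Real.exp t / (1 + c * Real.exp t) ^ 2)
  · exact (((by fun_prop : Continuous fun t : ℝ => 1 + c * Real.exp t)).log
      (fun t => (hpos t).ne')).continuousOn
  · intro x hx
    have h1 : HasDerivAt (fun t => 1 + c * Real.exp t) (c * Real.exp x) x :=
      ((Real.hasDerivAt_exp x).const_mul c).const_add 1
    exact (h1.log (hpos x).ne').hasDerivWithinAt
  · intro x hx
    have h1 : HasDerivAt (fun t => 1 + c * Real.exp t) (c * Real.exp x) x :=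
      ((Real.hasDerivAt_exp x).const_mul c).const_add 1
    have h2 : HasDerivAt (fun t => c * Real.exp t) (c * Real.exp x) x :=
      (Real.hasDerivAt_exp x).const_mul c
    have h3 := h2.div h1 (hpos x).ne'
    have heq : (c * Real.exp x * (1 + c * Real.exp x) - c * Real.exp x * (c * Real.exp x)) /
        (1 + c * Real.exp x) ^ 2 = c * Real.exp x / (1 + c * Real.exp x) ^ 2 := by
      congr 1; ring
    rw [heq] at h3
    exact h3.hasDerivWithinAt
  · intro x hx; positivity

lemma mono_log_one_add_mul_exp {c : ℝ} (hc : 0 < c) {s t : ℝ} (h : s ≤ t) :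
    Real.log (1 + c * Real.exp s) ≤ Real.log (1 + c * Real.exp t) := by
  have : (0:ℝ) < 1 + c * Real.exp s := by positivity
  apply Real.log_le_log this
  have := Real.exp_le_exp.mpr h
  nlinarith

/-- For `n ≥ 2`, `d ≥ 1`, `α > 0` and unit vectors `u i` in `ℝ^d`, the loss
`L_α(u) = ∑ i, log (1 + ∑_{j ≠ i} exp (α (⟪u j, u i⟫ - 1)))` satisfies the lower bound
`L_α(u) ≥ n * log (1 + (n-1) * exp (-nα/(n-1)))`. -/
theorem symmetric_loss_lower_bound (n d : ℕ) (hn : 2 ≤ n) (hd : 1 ≤ d)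
    (α : ℝ) (hα : 0 < α)
    (u : Fin n → EuclideanSpace ℝ (Fin d)) (hu : ∀ i, ‖u i‖ = 1) :
    (n : ℝ) * Real.log (1 + ((n : ℝ) - 1) * Real.exp (-((n : ℝ) * α) / ((n : ℝ) - 1))) ≤
      ∑ i, Real.log (1 + ∑ j ∈ Finset.univ.erase i, Real.exp (α * (⟪u j, u i⟫ - 1))) := by
  have hn2 : (2:ℝ) ≤ (n:ℝ) := by exact_mod_cast hn
  set c : ℝ := (n:ℝ) - 1 with hc_def
  have hc : 0 < c := by simp only [hc_def]; linarith
  have hnpos : (0:ℝ) < (n:ℝ) := by linarith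
  set a : Fin n → Fin n → ℝ := fun i j => α * (⟪u j, u i⟫ - 1) with ha_def
  set s : Fin n → ℝ := fun i => (∑ j ∈ Finset.univ.erase i, a i j) / c with hs_def
  set g : ℝ → ℝ := fun t => Real.log (1 + c * Real.exp t) with hg_def
  have hcard : ∀ i : Fin n, ((Finset.univ.erase i).card : ℝ) = c := by
    intro i
    rw [Finset.card_erase_of_mem (Finset.mem_univ i), Finset.card_univ, Fintype.card_fin]
    rw [Nat.cast_sub (by omega), Nat.cast_one]
  -- Step C: per-index Jensen with exp
  have stepC : ∀ i : Fin n, g (s i) ≤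
      Real.log (1 + ∑ j ∈ Finset.univ.erase i, Real.exp (a i j)) := by
    intro i
    have hw : ∑ j ∈ Finset.univ.erase i, (1/c) = 1 := by
      rw [Finset.sum_const, nsmul_eq_mul, hcard i]
      field_simp
    have hjensen := convexOn_exp.map_sum_le (t := Finset.univ.erase i)
      (w := fun _ => 1/c) (p := a i) (fun _ _ => by positivity) hw
      (fun _ _ => Set.mem_univ _)
    simp only [smul_eq_mul] at hjensen
    have hs_eq : s i = ∑ j ∈ Finset.univ.erase i, (1/c) * a i j := by
      rw [hs_def]
      rw [← Finset.mul_sum]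
      field_simp
    have h1 : c * Real.exp (s i) ≤ ∑ j ∈ Finset.univ.erase i, Real.exp (a i j) := by
      rw [hs_eq]
      calc c * Real.exp (∑ j ∈ Finset.univ.erase i, (1/c) * a i j)
          ≤ c * ∑ j ∈ Finset.univ.erase i, (1/c) * Real.exp (a i j) := by
            exact mul_le_mul_of_nonneg_left hjensen hc.le
        _ = ∑ j ∈ Finset.univ.erase i, Real.exp (a i j) := by
            rw [← Finset.mul_sum, ← mul_assoc, mul_one_div_cancel hc.ne', one_mul]
    apply Real.log_le_log (by positivity)
    linarith
  -- Step D: outer Jensen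
  have stepD : (n:ℝ) * g ((∑ i, s i) / n) ≤ ∑ i, g (s i) := by
    have hw : ∑ _i : Fin n, (1/(n:ℝ)) = 1 := by
      rw [Finset.sum_const, nsmul_eq_mul, Finset.card_univ, Fintype.card_fin]
      field_simp
    have hjensen := (convexOn_log_one_add_mul_exp hc).map_sum_le (t := Finset.univ)
      (w := fun _ => 1/(n:ℝ)) (p := s) (fun _ _ => by positivity) hw
      (fun _ _ => Set.mem_univ _)
    simp only [smul_eq_mul] at hjensen
    have h1 : (∑ i, (1/(n:ℝ)) * s i) = (∑ i, s i) / n := by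
      rw [← Finset.mul_sum]; ring
    rw [h1] at hjensen
    have h2 : (∑ i, (1/(n:ℝ)) * g (s i)) = (∑ i, g (s i)) / n := by
      rw [← Finset.mul_sum]; ring
    rw [h2] at hjensen
    rw [mul_comm]
    exact (le_div_iff₀ hnpos).mp hjensen
  -- Step E: lower bound on the mean
  have inner_self : ∀ i : Fin n, ⟪u i, u i⟫ = 1 := by
    intro i
    rw [real_inner_self_eq_norm_mul_norm, hu i, one_mul]
  have key : (0:ℝ) ≤ ∑ i, ∑ j, ⟪u j, u i⟫ := by
    have h : ∑ i, ∑ j, ⟪u j, u i⟫ = ⟪∑ j, u j, ∑ i, u i⟫ := by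
      rw [inner_sum]
      exact Finset.sum_congr rfl fun i _ => (sum_inner _ _ _).symm
    rw [h]
    exact real_inner_self_nonneg
  have hsum_inner : -(n:ℝ) ≤ ∑ i, ∑ j ∈ Finset.univ.erase i, ⟪u j, u i⟫ := by
    have h : ∀ i : Fin n, ∑ j ∈ Finset.univ.erase i, ⟪u j, u i⟫ =
        (∑ j, ⟪u j, u i⟫) - 1 := by
      intro i
      rw [Finset.sum_erase_eq_sub (Finset.mem_univ i), inner_self i]
    rw [Finset.sum_congr rfl fun i _ => h i, Finset.sum_sub_distrib]
    simp only [Finset.sum_const, Finset.card_univ, Fintype.card_fin, nsmul_eq_mul, mul_one]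
    linarith
  have hsum_s : -((n:ℝ) * α) / c ≤ (∑ i, s i) / n := by
    have h1 : ∑ i, s i = (∑ i, ∑ j ∈ Finset.univ.erase i, a i j) / c := by
      rw [hs_def, ← Finset.sum_div]
    have h2 : ∀ i : Fin n, ∑ j ∈ Finset.univ.erase i, a i j =
        α * ((∑ j ∈ Finset.univ.erase i, ⟪u j, u i⟫) - c) := by
      intro i
      have hterm : ∀ j : Fin n, a i j = α * ⟪u j, u i⟫ - α := fun j => by
        simp only [ha_def]; ring
      rw [Finset.sum_congr rfl fun j _ => hterm j, Finset.sum_sub_distrib, Finset.sum_const,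
        nsmul_eq_mul, hcard i, ← Finset.mul_sum]
      ring
    have h3 : ∑ i, ∑ j ∈ Finset.univ.erase i, a i j =
        α * ((∑ i, ∑ j ∈ Finset.univ.erase i, ⟪u j, u i⟫) - n * c) := by
      rw [Finset.sum_congr rfl fun i _ => h2 i, ← Finset.mul_sum, Finset.sum_sub_distrib]
      simp only [Finset.sum_const, Finset.card_univ, Fintype.card_fin, nsmul_eq_mul]
    have h4 : -((n:ℝ) * n * α) ≤ ∑ i, ∑ j ∈ Finset.univ.erase i, a i j := by
      rw [h3]
      have : -(n:ℝ) - n * c ≥ -(n:ℝ)*n := by rw [hc_def]; ring_nf; nlinarith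
      nlinarith [hsum_inner]
    rw [h1]
    rw [div_le_div_iff₀ (by positivity) hnpos, div_mul_eq_mul_div, le_div_iff₀ hc]
    nlinarith [h4]
  -- Combine
  calc (n:ℝ) * Real.log (1 + c * Real.exp (-((n:ℝ) * α) / c))
      ≤ (n:ℝ) * g ((∑ i, s i) / n) := by
        apply mul_le_mul_of_nonneg_left _ hnpos.le
        exact mono_log_one_add_mul_exp hc hsum_s
    _ ≤ ∑ i, g (s i) := stepD
    _ ≤ ∑ i, Real.log (1 + ∑ j ∈ Finset.univ.erase i, Real.exp (α * (⟪u j, u i⟫ - 1))) :=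
        Finset.sum_le_sum fun i _ => stepC i
end

section
/- Let n ≥ 1 be an integer and let u_1, …, u_n, v_1, …, v_n be unit vectors in ℝ^d. Then n · Σ_{i=1}^n ⟨v_i, u_i⟩ − ⟨ Σ_{i=1}^n v_i , Σ_{i=1}^n u_i ⟩ ≤ n². -/
open scoped RealInnerProductSpace BigOperators

/-- For `n ≥ 1` unit vectors `u i, v i` in `ℝ^d`,
`n ∑ i, ⟪v i, u i⟫ - ⟪∑ i, v i, ∑ i, u i⟫ ≤ n²`. -/
theorem quadratic_form_upper_bound (n d : ℕ) (hn : 1 ≤ n)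
    (u v : Fin n → EuclideanSpace ℝ (Fin d))
    (hu : ∀ i, ‖u i‖ = 1) (hv : ∀ i, ‖v i‖ = 1) :
    (n : ℝ) * (∑ i, ⟪v i, u i⟫) - ⟪∑ i, v i, ∑ i, u i⟫ ≤ (n : ℝ) ^ 2 := by
  set S := ∑ i, u i with hS
  have h1 : (n : ℝ) * (∑ i, ⟪v i, u i⟫) - ⟪∑ i, v i, S⟫
      = ∑ i, ⟪v i, (n : ℝ) • u i - S⟫ := by
    rw [sum_inner, Finset.mul_sum, ← Finset.sum_sub_distrib]
    refine Finset.sum_congr rfl fun i _ => ?_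
    rw [inner_sub_right, real_inner_smul_right]
  have h2 : ∀ i, ⟪v i, (n : ℝ) • u i - S⟫ ≤ ‖(n : ℝ) • u i - S‖ := fun i => by
    calc ⟪v i, (n : ℝ) • u i - S⟫ ≤ ‖v i‖ * ‖(n : ℝ) • u i - S‖ := real_inner_le_norm _ _
      _ = ‖(n : ℝ) • u i - S‖ := by rw [hv i, one_mul]
  have hinner : ∑ i, ⟪u i, S⟫ = ‖S‖ ^ 2 := by
    rw [← sum_inner, ← hS, real_inner_self_eq_norm_sq]
  have hsq : ∑ i, ‖(n : ℝ) • u i - S‖ ^ 2 ≤ (n : ℝ) ^ 3 := by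
    have heq : ∀ i, ‖(n : ℝ) • u i - S‖ ^ 2
        = (n : ℝ) ^ 2 - 2 * ((n : ℝ) * ⟪u i, S⟫) + ‖S‖ ^ 2 := fun i => by
      rw [norm_sub_sq_real, real_inner_smul_left, norm_smul, hu i]
      simp
      try ring
    rw [Finset.sum_congr rfl fun i _ => heq i]
    rw [Finset.sum_add_distrib, Finset.sum_sub_distrib, Finset.sum_const, ← Finset.mul_sum,
      ← Finset.mul_sum, hinner]
    simp only [Finset.sum_const, Finset.card_univ, Fintype.card_fin, nsmul_eq_mul]
    have hn0 : (1 : ℝ) ≤ (n : ℝ) := by exact_mod_cast hn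
    nlinarith [sq_nonneg ‖S‖]
  have hCS : (∑ i, ‖(n : ℝ) • u i - S‖) ^ 2 ≤ (n : ℝ) * ∑ i, ‖(n : ℝ) • u i - S‖ ^ 2 := by
    have := sq_sum_le_card_mul_sum_sq (s := (Finset.univ : Finset (Fin n)))
      (f := fun i => ‖(n : ℝ) • u i - S‖)
    simpa using this
  have hsum_nonneg : 0 ≤ ∑ i, ‖(n : ℝ) • u i - S‖ :=
    Finset.sum_nonneg fun i _ => norm_nonneg _
  have hfinal : ∑ i, ‖(n : ℝ) • u i - S‖ ≤ (n : ℝ) ^ 2 := by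
    have hn0 : (0 : ℝ) ≤ (n : ℝ) := Nat.cast_nonneg n
    nlinarith
  calc (n : ℝ) * (∑ i, ⟪v i, u i⟫) - ⟪∑ i, v i, S⟫
      = ∑ i, ⟪v i, (n : ℝ) • u i - S⟫ := h1
    _ ≤ ∑ i, ‖(n : ℝ) • u i - S‖ := Finset.sum_le_sum fun i _ => h2 i
    _ ≤ (n : ℝ) ^ 2 := hfinal
end

section
/- Let d ≥ 2, let S = {x ∈ ℝ^d : ‖x‖ = 1} be the unit sphere, and fix α > 0. Define L_α(μ) = ∫_S log( ∫_S e^{α(⟨x,y⟩ − 1)} dμ(y) ) dμ(x) for Borel probability measures μ on S. If a sequence (μ_k) of Borel probability measures on S converges weakly to a probability measure μ, then L_α(μ_k) → L_α(μ); that is, L_α is weakly continuous on the space of probability measures on S. -/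
open scoped RealInnerProductSpace BigOperators Topology
open MeasureTheory Filter

section Aux

variable {d : ℕ}

noncomputable def sK (α : ℝ) (x y : Metric.sphere (0 : EuclideanSpace ℝ (Fin d)) 1) : ℝ :=
  Real.exp (α * (⟪(x : EuclideanSpace ℝ (Fin d)), (y : EuclideanSpace ℝ (Fin d))⟫ - 1))

lemma sK_cont (α : ℝ) : Continuous fun p : (Metric.sphere (0 : EuclideanSpace ℝ (Fin d)) 1) ×
    (Metric.sphere (0 : EuclideanSpace ℝ (Fin d)) 1) => sK α p.1 p.2 := by
  apply Real.continuous_exp.comp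
  exact (continuous_const.mul ((((continuous_subtype_val.comp continuous_fst).inner
    (continuous_subtype_val.comp continuous_snd))).sub continuous_const))

lemma sK_cont_right (α : ℝ) (x : Metric.sphere (0 : EuclideanSpace ℝ (Fin d)) 1) :
    Continuous fun y => sK (d := d) α x y := by
  apply Real.continuous_exp.comp
  exact continuous_const.mul ((continuous_const.inner continuous_subtype_val).sub continuous_const)

lemma sK_cont_left (α : ℝ) (y : Metric.sphere (0 : EuclideanSpace ℝ (Fin d)) 1) :
    Continuous fun x => sK (d := d) α x y := by
  apply Real.continuous_exp.comp
  exact continuous_const.mul ((continuous_subtype_val.inner continuous_const).sub continuous_const)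

lemma sphere_norm (x : Metric.sphere (0 : EuclideanSpace ℝ (Fin d)) 1) :
    ‖(x : EuclideanSpace ℝ (Fin d))‖ = 1 := by
  simpa [mem_sphere_zero_iff_norm] using x.2

lemma sK_mem {α : ℝ} (hα : 0 ≤ α) (x y : Metric.sphere (0 : EuclideanSpace ℝ (Fin d)) 1) :
    Real.exp (-(2*α)) ≤ sK α x y ∧ sK α x y ≤ 1 := by
  have h1 : |⟪(x : EuclideanSpace ℝ (Fin d)), (y : EuclideanSpace ℝ (Fin d))⟫| ≤ 1 := by
    have := abs_real_inner_le_norm (x : EuclideanSpace ℝ (Fin d)) (y : EuclideanSpace ℝ (Fin d))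
    simpa [sphere_norm] using this
  rw [abs_le] at h1
  refine ⟨Real.exp_le_exp.2 (by nlinarith), ?_⟩
  rw [show (1:ℝ) = Real.exp 0 by simp]
  exact Real.exp_le_exp.2 (by nlinarith)

/-- Integrability of continuous functions on the (compact) sphere w.r.t. finite measures. -/
lemma cont_integrable {f : Metric.sphere (0 : EuclideanSpace ℝ (Fin d)) 1 → ℝ}
    (hf : Continuous f) (ν : Measure (Metric.sphere (0 : EuclideanSpace ℝ (Fin d)) 1))
    [IsFiniteMeasure ν] : Integrable f ν := by
  obtain ⟨C, hC⟩ := (isCompact_range hf).isBounded.subset_ball 0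
  refine (integrable_const C).mono' hf.aestronglyMeasurable (ae_of_all _ fun x => ?_)
  exact mem_closedBall_zero_iff.mp (Metric.ball_subset_closedBall (hC ⟨x, rfl⟩))

noncomputable def sF (α : ℝ) (ν : Measure (Metric.sphere (0 : EuclideanSpace ℝ (Fin d)) 1))
    (x : Metric.sphere (0 : EuclideanSpace ℝ (Fin d)) 1) : ℝ := ∫ y, sK α x y ∂ν

lemma sF_lb {α : ℝ} (hα : 0 ≤ α) (ν : Measure (Metric.sphere (0 : EuclideanSpace ℝ (Fin d)) 1))
    [IsProbabilityMeasure ν] (x : Metric.sphere (0 : EuclideanSpace ℝ (Fin d)) 1) :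
    Real.exp (-(2*α)) ≤ sF α ν x := by
  have : (Real.exp (-(2*α))) = ∫ _y, Real.exp (-(2*α)) ∂ν := by simp
  rw [sF, this]
  exact integral_mono (integrable_const _) (cont_integrable (sK_cont_right α x) ν)
    fun y => (sK_mem hα x y).1

lemma sF_ub {α : ℝ} (hα : 0 ≤ α) (ν : Measure (Metric.sphere (0 : EuclideanSpace ℝ (Fin d)) 1))
    [IsProbabilityMeasure ν] (x : Metric.sphere (0 : EuclideanSpace ℝ (Fin d)) 1) :
    sF α ν x ≤ 1 := by
  rw [sF]
  refine le_trans ?_ (le_of_eq (by simp : (∫ _y, (1:ℝ) ∂ν) = 1))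
  exact integral_mono (cont_integrable (sK_cont_right α x) ν) (integrable_const _)
    fun y => (sK_mem hα x y).2

lemma sF_pos {α : ℝ} (hα : 0 ≤ α) (ν : Measure (Metric.sphere (0 : EuclideanSpace ℝ (Fin d)) 1))
    [IsProbabilityMeasure ν] (x : Metric.sphere (0 : EuclideanSpace ℝ (Fin d)) 1) :
    0 < sF α ν x := lt_of_lt_of_le (Real.exp_pos _) (sF_lb hα ν x)

lemma sF_cont {α : ℝ} (hα : 0 ≤ α) (ν : Measure (Metric.sphere (0 : EuclideanSpace ℝ (Fin d)) 1))
    [IsProbabilityMeasure ν] : Continuous (sF α ν) := by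
  refine continuous_of_dominated (fun x => (sK_cont_right α x).aestronglyMeasurable)
    (fun x => ae_of_all _ fun y => ?_) (integrable_const 1)
    (ae_of_all _ fun y => sK_cont_left α y)
  rw [Real.norm_eq_abs, abs_of_pos (show (0:ℝ) < sK α x y from Real.exp_pos _)]
  exact (sK_mem hα x y).2

lemma log_lip {m a b : ℝ} (hm : 0 < m) (ha : m ≤ a) (hb : m ≤ b) :
    |Real.log a - Real.log b| ≤ |a - b| / m := by
  have key : ∀ a b : ℝ, m ≤ a → m ≤ b → b ≤ a → Real.log a - Real.log b ≤ (a - b) / m := by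
    intro a b ha hb hba
    have hb0 : 0 < b := lt_of_lt_of_le hm hb
    have ha0 : 0 < a := lt_of_lt_of_le hm ha
    rw [← Real.log_div ha0.ne' hb0.ne']
    calc Real.log (a / b) ≤ a / b - 1 := Real.log_le_sub_one_of_pos (div_pos ha0 hb0)
      _ = (a - b) / b := by field_simp
      _ ≤ (a - b) / m := by gcongr
  rcases le_total b a with h | h
  · rw [abs_of_nonneg (sub_nonneg.2 ((Real.log_le_log_iff (lt_of_lt_of_le hm hb)
      (lt_of_lt_of_le hm ha)).2 h)), abs_of_nonneg (sub_nonneg.2 h)]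
    exact key a b ha hb h
  · rw [abs_sub_comm, abs_sub_comm a b,
      abs_of_nonneg (sub_nonneg.2 ((Real.log_le_log_iff (lt_of_lt_of_le hm ha)
      (lt_of_lt_of_le hm hb)).2 h)), abs_of_nonneg (sub_nonneg.2 h)]
    exact key b a hb ha h

lemma sF_eq_integral_bcf (α : ℝ) (ν : Measure (Metric.sphere (0 : EuclideanSpace ℝ (Fin d)) 1))
    (x : Metric.sphere (0 : EuclideanSpace ℝ (Fin d)) 1) :
    sF α ν x = ∫ y, (BoundedContinuousFunction.mkOfCompact
      ⟨fun y => sK α x y, sK_cont_right α x⟩) y ∂ν := rfl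

lemma unif_conv {α : ℝ} (hα : 0 ≤ α)
    (μseq : ℕ → Measure (Metric.sphere (0 : EuclideanSpace ℝ (Fin d)) 1))
    (hseq : ∀ k, IsProbabilityMeasure (μseq k))
    (μ : Measure (Metric.sphere (0 : EuclideanSpace ℝ (Fin d)) 1))
    (hμ : IsProbabilityMeasure μ)
    (hweak : ∀ f : BoundedContinuousFunction
        (Metric.sphere (0 : EuclideanSpace ℝ (Fin d)) 1) ℝ,
      Tendsto (fun k => ∫ x, f x ∂(μseq k)) atTop (𝓝 (∫ x, f x ∂μ)))
    {ε : ℝ} (hε : 0 < ε) :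
    ∃ N, ∀ k ≥ N, ∀ x, |sF α (μseq k) x - sF α μ x| ≤ 3 * ε := by
  have ucont : UniformContinuous fun p : (Metric.sphere (0 : EuclideanSpace ℝ (Fin d)) 1) ×
      (Metric.sphere (0 : EuclideanSpace ℝ (Fin d)) 1) => sK α p.1 p.2 :=
    CompactSpace.uniformContinuous_of_continuous (sK_cont α)
  obtain ⟨δ, hδ, hδ'⟩ := Metric.uniformContinuous_iff.mp ucont ε hε
  -- key: points at distance < δ have close kernels, hence close sF, for any probability measure
  have hclose : ∀ (ν : Measure (Metric.sphere (0 : EuclideanSpace ℝ (Fin d)) 1)),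
      IsProbabilityMeasure ν → ∀ x i, dist x i < δ → |sF α ν x - sF α ν i| ≤ ε := by
    intro ν hν x i hxi
    haveI := hν
    have hint1 := cont_integrable (sK_cont_right α x) ν
    have hint2 := cont_integrable (sK_cont_right α i) ν
    rw [sF, sF, ← integral_sub hint1 hint2]
    calc |∫ y, (sK α x y - sK α i y) ∂ν|
        ≤ ε * (ν Set.univ).toReal := by
          rw [show |∫ y, (sK α x y - sK α i y) ∂ν| = ‖∫ y, (sK α x y - sK α i y) ∂ν‖ from rfl]
          refine norm_integral_le_of_norm_le_const (μ := ν) (ae_of_all _ fun y => ?_)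
          rw [Real.norm_eq_abs, ← Real.dist_eq]
          refine le_of_lt (hδ' (a := (x, y)) (b := (i, y)) ?_)
          rw [Prod.dist_eq]
          simpa using hxi
      _ = ε := by simp [hν.measure_univ]
  -- finite δ-net
  obtain ⟨t, htfin, htcov⟩ := Metric.totallyBounded_iff.mp
    (isCompact_univ (X := Metric.sphere (0 : EuclideanSpace ℝ (Fin d)) 1)).totallyBounded δ hδ
  -- convergence at net points
  have hev : ∀ᶠ k in atTop, ∀ i ∈ t, |sF α (μseq k) i - sF α μ i| < ε := by
    rw [eventually_all_finite htfin]
    intro i _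
    have := hweak (BoundedContinuousFunction.mkOfCompact ⟨fun y => sK α i y, sK_cont_right α i⟩)
    rw [← sF_eq_integral_bcf α μ i] at this
    have := Metric.tendsto_atTop.mp this ε hε
    obtain ⟨N, hN⟩ := this
    refine eventually_atTop.2 ⟨N, fun k hk => ?_⟩
    have := hN k hk
    rw [Real.dist_eq] at this
    simpa [sF_eq_integral_bcf] using this
  obtain ⟨N, hN⟩ := eventually_atTop.mp hev
  refine ⟨N, fun k hk x => ?_⟩
  have hx : ∃ i ∈ t, x ∈ Metric.ball i δ := by simpa using htcov (Set.mem_univ x)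
  obtain ⟨i, hit, hxi⟩ := hx
  rw [Metric.mem_ball] at hxi
  have h1 := hclose (μseq k) (hseq k) x i hxi
  have h2 := hN k hk i hit
  have h3 := hclose μ hμ x i hxi
  calc |sF α (μseq k) x - sF α μ x|
      ≤ |sF α (μseq k) x - sF α (μseq k) i| + |sF α (μseq k) i - sF α μ i|
        + |sF α μ i - sF α μ x| := by
          have := abs_sub_le (sF α (μseq k) x) (sF α (μseq k) i) (sF α μ x)
          have := abs_sub_le (sF α (μseq k) i) (sF α μ i) (sF α μ x)
          linarith [abs_sub_le (sF α (μseq k) x) (sF α (μseq k) i) (sF α μ x),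
            abs_sub_le (sF α (μseq k) i) (sF α μ i) (sF α μ x)]
    _ ≤ ε + ε + ε := by
          have h3' : |sF α μ i - sF α μ x| ≤ ε := by rw [abs_sub_comm]; exact h3
          linarith
    _ = 3 * ε := by ring

end Aux

/-- On the unit sphere `S ⊂ ℝ^d`, `d ≥ 2`, with `α > 0`, the functional
`L_α(μ) = ∫ log (∫ exp (α (⟪x,y⟫ - 1)) dμ(y)) dμ(x)` is weakly continuous: if probability
measures `μ_k` converge weakly to a probability measure `μ` (i.e. integrals of all bounded
continuous functions converge), then `L_α(μ_k) → L_α(μ)`. -/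
theorem loss_weakly_continuous (d : ℕ) (hd : 2 ≤ d) (α : ℝ) (hα : 0 < α)
    (μseq : ℕ → Measure (Metric.sphere (0 : EuclideanSpace ℝ (Fin d)) 1))
    (hseq : ∀ k, IsProbabilityMeasure (μseq k))
    (μ : Measure (Metric.sphere (0 : EuclideanSpace ℝ (Fin d)) 1))
    (hμ : IsProbabilityMeasure μ)
    (hweak : ∀ f : BoundedContinuousFunction
        (Metric.sphere (0 : EuclideanSpace ℝ (Fin d)) 1) ℝ,
      Tendsto (fun k => ∫ x, f x ∂(μseq k)) atTop (𝓝 (∫ x, f x ∂μ))) :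
    Tendsto (fun k =>
        ∫ x, Real.log (∫ y, Real.exp (α * (⟪(x : EuclideanSpace ℝ (Fin d)),
          (y : EuclideanSpace ℝ (Fin d))⟫ - 1)) ∂(μseq k)) ∂(μseq k))
      atTop
      (𝓝 (∫ x, Real.log (∫ y, Real.exp (α * (⟪(x : EuclideanSpace ℝ (Fin d)),
          (y : EuclideanSpace ℝ (Fin d))⟫ - 1)) ∂μ) ∂μ)) := by
  have hα0 : (0:ℝ) ≤ α := hα.le
  have hm0 : (0:ℝ) < Real.exp (-(2*α)) := Real.exp_pos _
  set c : ℝ := Real.exp (2*α) with hc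
  have hc0 : 0 < c := Real.exp_pos _
  -- the goal in terms of sF
  show Tendsto (fun k => ∫ x, Real.log (sF α (μseq k) x) ∂(μseq k)) atTop
    (𝓝 (∫ x, Real.log (sF α μ x) ∂μ))
  -- continuity facts
  have hlogcont : ∀ (ν : Measure (Metric.sphere (0 : EuclideanSpace ℝ (Fin d)) 1)),
      IsProbabilityMeasure ν → Continuous fun x => Real.log (sF α ν x) := by
    intro ν hν
    haveI := hν
    exact (sF_cont hα0 ν).log fun x => (sF_pos hα0 ν x).ne'
  -- bounded continuous limit integrand
  set g : BoundedContinuousFunction (Metric.sphere (0 : EuclideanSpace ℝ (Fin d)) 1) ℝ :=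
    BoundedContinuousFunction.mkOfCompact ⟨fun x => Real.log (sF α μ x), hlogcont μ hμ⟩ with hg
  have hgtend := hweak g
  rw [Metric.tendsto_atTop]
  intro ε hε
  -- choose ε₁ so that c * (3 * ε₁) = ε / 2
  set ε₁ : ℝ := ε / (6 * c) with hε₁def
  have hε₁ : 0 < ε₁ := div_pos hε (by positivity)
  obtain ⟨N₁, hN₁⟩ := unif_conv hα0 μseq hseq μ hμ hweak hε₁
  obtain ⟨N₂, hN₂⟩ := Metric.tendsto_atTop.mp hgtend (ε / 2) (by linarith)
  refine ⟨max N₁ N₂, fun k hk => ?_⟩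
  haveI := hseq k
  have hk1 : k ≥ N₁ := le_trans (le_max_left _ _) hk
  have hk2 : k ≥ N₂ := le_trans (le_max_right _ _) hk
  -- first term: ∫ log F_k dμ_k vs ∫ log F dμ_k
  have hint1 : Integrable (fun x => Real.log (sF α (μseq k) x)) (μseq k) :=
    cont_integrable (hlogcont (μseq k) (hseq k)) _
  have hint2 : Integrable (fun x => Real.log (sF α μ x)) (μseq k) :=
    cont_integrable (hlogcont μ hμ) _
  have hterm1 : |∫ x, Real.log (sF α (μseq k) x) ∂(μseq k)
      - ∫ x, Real.log (sF α μ x) ∂(μseq k)| ≤ ε / 2 := by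
    rw [← integral_sub hint1 hint2]
    have hbd : ∀ x, ‖Real.log (sF α (μseq k) x) - Real.log (sF α μ x)‖ ≤ 3 * ε₁ * c := by
      intro x
      rw [Real.norm_eq_abs]
      calc |Real.log (sF α (μseq k) x) - Real.log (sF α μ x)|
          ≤ |sF α (μseq k) x - sF α μ x| / Real.exp (-(2*α)) :=
            log_lip hm0 (sF_lb hα0 _ x) (sF_lb hα0 μ x)
        _ ≤ (3 * ε₁) / Real.exp (-(2*α)) := by
            gcongr
            exact hN₁ k hk1 x
        _ = 3 * ε₁ * c := by
            rw [div_eq_mul_inv, ← Real.exp_neg]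
            simp [hc]
    calc |∫ x, (Real.log (sF α (μseq k) x) - Real.log (sF α μ x)) ∂(μseq k)|
        ≤ (3 * ε₁ * c) * ((μseq k) Set.univ).toReal := by
          rw [show |∫ x, (Real.log (sF α (μseq k) x) - Real.log (sF α μ x)) ∂(μseq k)| =
            ‖∫ x, (Real.log (sF α (μseq k) x) - Real.log (sF α μ x)) ∂(μseq k)‖ from rfl]
          exact norm_integral_le_of_norm_le_const (ae_of_all _ hbd)
      _ = 3 * ε₁ * c := by simp [(hseq k).measure_univ]
      _ = ε / 2 := by
          rw [hε₁def]
          field_simp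
          ring
  -- second term: weak convergence for g
  have hterm2 : |∫ x, Real.log (sF α μ x) ∂(μseq k)
      - ∫ x, Real.log (sF α μ x) ∂μ| < ε / 2 := by
    have := hN₂ k hk2
    rw [Real.dist_eq] at this
    simpa [hg] using this
  rw [Real.dist_eq]
  calc |∫ x, Real.log (sF α (μseq k) x) ∂(μseq k) - ∫ x, Real.log (sF α μ x) ∂μ|
      ≤ |∫ x, Real.log (sF α (μseq k) x) ∂(μseq k) - ∫ x, Real.log (sF α μ x) ∂(μseq k)|
        + |∫ x, Real.log (sF α μ x) ∂(μseq k) - ∫ x, Real.log (sF α μ x) ∂μ| :=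
        abs_sub_le _ _ _
    _ < ε := by linarith
end

section
/- Let n ≥ 1, d ≥ 1 be integers and let u_1, …, u_n be unit vectors in ℝ^d. Then the frame potential satisfies F(u_1, …, u_n) = Σ_{i,j=1}^n ⟨u_i, u_j⟩² ≥ n²/d, with equality if and only if the vectors form a unit norm tight frame, i.e., Σ_{i=1}^n ⟨u, u_i⟩² = (n/d)·‖u‖² for every u ∈ ℝ^d. -/
open scoped RealInnerProductSpace BigOperators


theorem fp_sum_swap4 (n d : ℕ) (f : Fin n → Fin d → ℝ) :
    ∑ i, ∑ j, (∑ a, f i a * f j a)^2 = ∑ a, ∑ b, (∑ i, f i a * f i b)^2 := by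
  simp_rw [sq, Finset.sum_mul_sum, mul_mul_mul_comm]
  rw [show (∑ i : Fin n, ∑ j : Fin n, ∑ a : Fin d, ∑ b : Fin d,
        (f i a * f i b) * (f j a * f j b))
      = ∑ i : Fin n, ∑ a : Fin d, ∑ j : Fin n, ∑ b : Fin d,
        (f i a * f i b) * (f j a * f j b)
    from Finset.sum_congr rfl fun i _ => Finset.sum_comm]
  rw [Finset.sum_comm]
  rw [show (∑ a : Fin d, ∑ i : Fin n, ∑ j : Fin n, ∑ b : Fin d,
        (f i a * f i b) * (f j a * f j b))
      = ∑ a : Fin d, ∑ i : Fin n, ∑ b : Fin d, ∑ j : Fin n,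
        (f i a * f i b) * (f j a * f j b)
    from Finset.sum_congr rfl fun a _ => Finset.sum_congr rfl fun i _ => Finset.sum_comm]
  exact Finset.sum_congr rfl fun a _ => Finset.sum_comm

theorem fp_sum_swap3 (n d : ℕ) (w : Fin d → ℝ) (f : Fin n → Fin d → ℝ) :
    ∑ i, (∑ a, w a * f i a)^2 = ∑ a, ∑ b, w a * w b * (∑ i, f i a * f i b) := by
  simp_rw [sq, Finset.sum_mul_sum, mul_mul_mul_comm, Finset.mul_sum]
  rw [Finset.sum_comm]
  exact Finset.sum_congr rfl fun a _ => Finset.sum_comm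

/-- (Benedetto–Fickus) For `n ≥ 1` unit vectors `u i` in `ℝ^d`, `d ≥ 1`,
the frame potential satisfies `∑_{i,j} ⟪u i, u j⟫² ≥ n²/d`, with equality iff the vectors
form a unit norm tight frame: `∑ i, ⟪u, u i⟫² = (n/d) ‖u‖²` for every `u ∈ ℝ^d`. -/
theorem frame_potential_lower_bound (n d : ℕ) (hn : 1 ≤ n) (hd : 1 ≤ d)
    (u : Fin n → EuclideanSpace ℝ (Fin d)) (hu : ∀ i, ‖u i‖ = 1) :
    (n : ℝ) ^ 2 / d ≤ (∑ i, ∑ j, ⟪u i, u j⟫ ^ 2) ∧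
    ((∑ i, ∑ j, ⟪u i, u j⟫ ^ 2) = (n : ℝ) ^ 2 / d ↔
      ∀ w : EuclideanSpace ℝ (Fin d), ∑ i, ⟪w, u i⟫ ^ 2 = ((n : ℝ) / d) * ‖w‖ ^ 2) := by
  classical
  have hd0 : (0:ℝ) < (d:ℝ) := by exact_mod_cast hd
  set c : ℝ := (n:ℝ)/(d:ℝ) with hc
  set M : Fin d → Fin d → ℝ := fun a b => ∑ i, u i a * u i b with hMdef
  have hinner : ∀ x y : EuclideanSpace ℝ (Fin d), ⟪x, y⟫ = ∑ a, x a * y a := by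
    intro x y; simp [PiLp.inner_apply, RCLike.inner_apply]
    exact Finset.sum_congr rfl fun _ _ => mul_comm _ _
  have hnorm : ∀ x : EuclideanSpace ℝ (Fin d), ‖x‖^2 = ∑ a, x a * x a := by
    intro x; rw [← real_inner_self_eq_norm_sq, hinner]
  have hunit : ∀ i, ∑ a, u i a * u i a = 1 := by
    intro i; rw [← hnorm, hu i, one_pow]
  have htrace : ∑ a, M a a = (n:ℝ) := by
    rw [hMdef, Finset.sum_comm]; simp [hunit]
  have hMsymm : ∀ a b, M a b = M b a := by
    intro a b; simp only [hMdef]; exact Finset.sum_congr rfl fun i _ => mul_comm _ _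
  have hF : (∑ i, ∑ j, ⟪u i, u j⟫ ^ 2) = ∑ a, ∑ b, (M a b)^2 := by
    simp_rw [hinner]
    exact fp_sum_swap4 n d (fun i a => u i a)
  have hkey : ∑ a, ∑ b, (M a b)^2
      = (∑ a, ∑ b, (M a b - (if a = b then c else 0))^2) + (n:ℝ)^2/(d:ℝ) := by
    have e1 : ∀ a b : Fin d, (M a b - (if a = b then c else 0))^2
        = (M a b)^2 - (if a = b then (2*c) * M a b else 0)
          + (if a = b then c^2 else 0) := by
      intro a b; split_ifs with h <;> ring
    simp_rw [e1, Finset.sum_add_distrib, Finset.sum_sub_distrib,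
      Finset.sum_ite_eq, Finset.mem_univ, if_true]
    rw [← Finset.mul_sum, htrace, Finset.sum_const, Finset.card_univ,
      Fintype.card_fin, nsmul_eq_mul, hc]
    field_simp
    ring
  have hSnn : (0:ℝ) ≤ ∑ a, ∑ b, (M a b - (if a = b then c else 0))^2 :=
    Finset.sum_nonneg fun a _ => Finset.sum_nonneg fun b _ => sq_nonneg _
  have hSzero : (∑ a, ∑ b, (M a b - (if a = b then c else 0))^2) = 0
      ↔ ∀ a b, M a b = if a = b then c else 0 := by
    rw [Finset.sum_eq_zero_iff_of_nonneg
      (fun a _ => Finset.sum_nonneg fun b _ => sq_nonneg _)]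
    constructor
    · intro h a b
      have h2 := (Finset.sum_eq_zero_iff_of_nonneg
        (fun b _ => sq_nonneg _)).mp (h a (Finset.mem_univ a)) b (Finset.mem_univ b)
      have := pow_eq_zero_iff (n := 2) (by norm_num) |>.mp h2
      linarith [this]
    · intro h a _
      apply Finset.sum_eq_zero
      intro b _
      rw [h a b]; simp
  -- quadratic form identity
  have hQ : ∀ w : Fin d → ℝ,
      (∑ i, ⟪(WithLp.toLp 2 w : EuclideanSpace ℝ (Fin d)), u i⟫ ^ 2)
        = ∑ a, ∑ b, w a * w b * M a b := by
    intro w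
    simp_rw [hinner]
    exact fp_sum_swap3 n d w (fun i a => u i a)
  constructor
  · rw [hF, hkey]; linarith
  · rw [hF, hkey]
    constructor
    · -- equality → tight
      intro h
      have hS0 : (∑ a, ∑ b, (M a b - (if a = b then c else 0))^2) = 0 := by linarith
      have hM := hSzero.mp hS0
      intro w
      rw [hQ w, hnorm]
      have : ∀ a : Fin d, ∑ b, w a * w b * M a b = w a * w a * c := by
        intro a
        rw [show (∑ b, w a * w b * M a b) = ∑ b, w a * w b * (if a = b then c else 0)
          from Finset.sum_congr rfl fun b _ => by rw [hM a b]]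
        simp [mul_ite, Finset.sum_ite_eq]
      simp_rw [this, ← Finset.sum_mul, hc]
      ring
    · -- tight → equality
      intro h
      have hq : ∀ w : Fin d → ℝ,
          ∑ a, ∑ b, w a * w b * M a b = c * ∑ a, w a * w a := by
        intro w
        rw [← hQ w, h (WithLp.toLp 2 w : EuclideanSpace ℝ (Fin d)), hnorm, hc]
      have hdiag : ∀ a, M a a = c := by
        intro a
        have := hq (fun x => if x = a then 1 else 0)
        simpa [ite_mul, Finset.sum_ite_eq', Finset.mem_univ] using this
      have hoff : ∀ a b, a ≠ b → M a b = 0 := by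
        intro a b hab
        have h2 := hq (fun x => (if x = a then (1:ℝ) else 0) + (if x = b then 1 else 0))
        simp only [add_mul, mul_add, ite_mul, mul_ite, zero_mul, mul_zero, one_mul,
          mul_one, zero_add, add_zero, Finset.sum_add_distrib,
          Finset.sum_ite_eq', Finset.mem_univ, if_true, if_neg hab, if_neg (Ne.symm hab)] at h2
        have hs := hMsymm a b
        have h3 := hdiag a
        have h4 := hdiag b
        linarith
      have hM : ∀ a b, M a b = if a = b then c else 0 := by
        intro a b
        by_cases h' : a = b
        · simp [h', hdiag]
        · simp [h', hoff a b h']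
      have : (∑ a, ∑ b, (M a b - (if a = b then c else 0))^2) = 0 := by
        apply Finset.sum_eq_zero; intro a _
        apply Finset.sum_eq_zero; intro b _
        rw [hM a b]; simp
      rw [this]; ring
end
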